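/- For θ ∈ (0,1), define f(k) = 2((1-θ)k + 1 + θ)/(θ|k² - 1|), μ = (1-θ)²/(θ(1+θ-2√θ)), and σ = (1-θ)/((1-√θ)(2√(θ+1) + √θ - 1)). Then for all k in the closed interval [-1/σ, 1] with k ≠ ±1, f(k) ≥ μ. -/
import Mathlib


set_option maxHeartbeats 1000000 in
theorem stmt0 (θ : ℝ) (hθ : θ ∈ Set.Ioo (0:ℝ) 1)
    (f : ℝ → ℝ) (hf : ∀ k, f k = 2 * ((1 - θ) * k + 1 + θ) / (θ * |k ^ 2 - 1|))
    (μ σ : ℝ)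
    (hμ : μ = (1 - θ) ^ 2 / (θ * (1 + θ - 2 * Real.sqrt θ)))
    (hσ : σ = (1 - θ) / ((1 - Real.sqrt θ) * (2 * Real.sqrt (θ + 1) + Real.sqrt θ - 1)))
    (k : ℝ) (hk : k ∈ Set.Icc (-1 / σ) 1) (hk1 : k ≠ 1) (hk2 : k ≠ -1) :
    μ ≤ f k := by
  obtain ⟨hθ0, hθ1⟩ := hθ
  set s := Real.sqrt θ with hs
  set t := Real.sqrt (θ + 1) with ht
  have hs2 : s ^ 2 = θ := Real.sq_sqrt hθ0.le
  have ht2 : t ^ 2 = θ + 1 := Real.sq_sqrt (by linarith)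
  have hs0 : 0 < s := Real.sqrt_pos.2 hθ0
  have hs1 : s < 1 := by nlinarith
  have ht0 : 0 ≤ t := Real.sqrt_nonneg _
  have ht1 : 1 < t := by nlinarith
  -- simplify μ
  have hμ' : μ = (1 + s) ^ 2 / θ := by
    rw [hμ, show 1 + θ - 2 * s = (1 - s) ^ 2 by nlinarith]
    rw [div_eq_div_iff (mul_pos hθ0 (pow_pos (by linarith : (0:ℝ) < 1 - s) 2)).ne' hθ0.ne']
    linear_combination (θ * (2 - θ - s ^ 2)) * hs2
  -- simplify σ and the lower bound
  have hσ' : σ = (1 + s) / (2 * t + s - 1) := by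
    rw [hσ, show (1:ℝ) - θ = (1 - s) * (1 + s) by nlinarith]
    exact mul_div_mul_left _ _ (by linarith)
  have hden : (0:ℝ) < 2 * t + s - 1 := by linarith
  have hlb : -1 / σ = (1 - s - 2 * t) / (1 + s) := by
    rw [hσ']
    field_simp
    ring
  have hk' : (1 - s - 2 * t) / (1 + s) ≤ k := hlb ▸ hk.1
  have hlow : 1 - s - 2 * t ≤ k * (1 + s) := by
    rw [div_le_iff₀ (by linarith)] at hk'
    linarith
  have hklt : k < 1 := lt_of_le_of_ne hk.2 hk1
  -- positivity of denominators
  have hne : k ^ 2 - 1 ≠ 0 := by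
    have h1 : k - 1 ≠ 0 := sub_ne_zero.2 hk1
    have h2 : k + 1 ≠ 0 := by intro h; exact hk2 (by linarith)
    have := mul_ne_zero h1 h2
    intro h; apply this; nlinarith
  have habs : 0 < |k ^ 2 - 1| := abs_pos.2 hne
  rw [hf k, hμ', div_le_div_iff₀ hθ0 (by positivity)]
  by_cases hc : k ^ 2 ≤ 1
  · have hlt : k ^ 2 < 1 := lt_of_le_of_ne hc (by intro h; exact hne (by linarith))
    rw [abs_of_neg (by linarith : k ^ 2 - 1 < 0), ← hs2]
    nlinarith [mul_nonneg (sq_nonneg s) (sq_nonneg ((1 + s) * k + (1 - s)))]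
  · push_neg at hc
    have hklt1 : k < -1 := by nlinarith
    rw [abs_of_pos (by linarith : 0 < k ^ 2 - 1), ← hs2]
    have hX1 : 0 ≤ (1 + s) * k - (1 - s) + 2 * t := by linarith [hlow, mul_comm k (1 + s)]
    have hX2 : 0 ≤ 2 * t - ((1 + s) * k - (1 - s)) := by
      nlinarith [mul_nonneg (by linarith : (0:ℝ) ≤ 1 + s) (by linarith : (0:ℝ) ≤ -1 - k)]
    have heq : s ^ 2 * (4 * t ^ 2) = s ^ 2 * (4 + 4 * s ^ 2) := by
      rw [ht2, ← hs2]; ring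
    nlinarith [mul_nonneg (sq_nonneg s) (mul_nonneg hX2 hX1), heq]
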